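/- arXiv:1102.3637 — 7 statements merged into one kernel-verified Lean document; each statement's English description precedes it below -/
import Mathlib

section
/- Let N ≥ 2 be an integer and let d₁ ≤ d₂ ≤ … ≤ d_{N+1} be positive integers satisfying d₁ + d₂ + … + d_N ≥ (N−1)·d_{N+1}. Then for every integer i with 1 ≤ i ≤ N−1 one has N·(d₁ + … + d_{i+1}) ≥ i·(d₁ + … + d_{N+1}) (equivalently, (N−i)·(d₁ + … + d_{i+1}) ≥ i·(d_{i+2} + … + d_{N+1})). -/
/--
Let `N ≥ 2` and let `d 1 ≤ d 2 ≤ … ≤ d (N+1)` be positive integers satisfying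
`d 1 + ⋯ + d N ≥ (N−1) · d (N+1)`. Then for every `i` with `1 ≤ i ≤ N−1` one has
`N·(d 1 + ⋯ + d (i+1)) ≥ i·(d 1 + ⋯ + d (N+1))`, equivalently
`(N−i)·(d 1 + ⋯ + d (i+1)) ≥ i·(d (i+2) + ⋯ + d (N+1))`.
-/
theorem stmt0 (N : ℕ) (hN : 2 ≤ N) (d : ℕ → ℤ)
    (hpos : ∀ k, 1 ≤ k → k ≤ N + 1 → 0 < d k)
    (hmono : ∀ j k, 1 ≤ j → j ≤ k → k ≤ N + 1 → d j ≤ d k)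
    (hsum : ((N : ℤ) - 1) * d (N + 1) ≤ ∑ k ∈ Finset.Icc 1 N, d k) :
    ∀ i : ℕ, 1 ≤ i → i ≤ N - 1 →
      (i : ℤ) * ∑ k ∈ Finset.Icc 1 (N + 1), d k ≤
        (N : ℤ) * ∑ k ∈ Finset.Icc 1 (i + 1), d k ∧
      (i : ℤ) * ∑ k ∈ Finset.Icc (i + 2) (N + 1), d k ≤
        ((N : ℤ) - (i : ℤ)) * ∑ k ∈ Finset.Icc 1 (i + 1), d k := by
  intro i hi1 hiN
  have hiN' : i + 1 ≤ N := by omega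
  have e0 : ∀ n : ℕ, Finset.Icc 1 n = Finset.Ioc 0 n := by
    intro n; ext x; simp [Nat.lt_iff_add_one_le]
  have e2 : Finset.Icc (i + 2) (N + 1) = Finset.Ioc (i + 1) (N + 1) := by
    ext x; simp; omega
  rw [e0, e0, e2]
  rw [e0] at hsum
  -- split sums
  have hs1 : ∑ k ∈ Finset.Ioc 0 (i + 1), d k + ∑ k ∈ Finset.Ioc (i + 1) N, d k
      = ∑ k ∈ Finset.Ioc 0 N, d k :=
    Finset.sum_Ioc_consecutive _ (by omega) (by omega)
  have hs2 : ∑ k ∈ Finset.Ioc 0 (i + 1), d k + ∑ k ∈ Finset.Ioc (i + 1) (N + 1), d k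
      = ∑ k ∈ Finset.Ioc 0 (N + 1), d k :=
    Finset.sum_Ioc_consecutive _ (by omega) (by omega)
  -- tail bounds
  have hA : ∑ k ∈ Finset.Ioc (i + 1) N, d k ≤ ((N : ℤ) - i - 1) * d (N + 1) := by
    calc ∑ k ∈ Finset.Ioc (i + 1) N, d k
        ≤ (Finset.Ioc (i + 1) N).card • d (N + 1) := by
          apply Finset.sum_le_card_nsmul
          intro k hk
          rw [Finset.mem_Ioc] at hk
          exact hmono k (N + 1) (by omega) (by omega) le_rfl
      _ = ((N : ℤ) - i - 1) * d (N + 1) := by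
          rw [Nat.card_Ioc, nsmul_eq_mul, Nat.cast_sub (by omega)]
          push_cast
          ring
  have hT : ∑ k ∈ Finset.Ioc (i + 1) (N + 1), d k ≤ ((N : ℤ) - i) * d (N + 1) := by
    calc ∑ k ∈ Finset.Ioc (i + 1) (N + 1), d k
        ≤ (Finset.Ioc (i + 1) (N + 1)).card • d (N + 1) := by
          apply Finset.sum_le_card_nsmul
          intro k hk
          rw [Finset.mem_Ioc] at hk
          exact hmono k (N + 1) (by omega) (by omega) le_rfl
      _ = ((N : ℤ) - i) * d (N + 1) := by
          rw [Nat.card_Ioc, nsmul_eq_mul, Nat.cast_sub (by omega)]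
          push_cast
          ring
  -- head lower bound
  have hS1 : (i : ℤ) * d (N + 1) ≤ ∑ k ∈ Finset.Ioc 0 (i + 1), d k := by linarith
  have hi' : (1 : ℤ) ≤ (i : ℤ) := by exact_mod_cast hi1
  have hNi : (i : ℤ) + 1 ≤ (N : ℤ) := by exact_mod_cast hiN'
  have key : (i : ℤ) * ∑ k ∈ Finset.Ioc (i + 1) (N + 1), d k ≤
      ((N : ℤ) - i) * ∑ k ∈ Finset.Ioc 0 (i + 1), d k := by
    nlinarith [hT, hS1]
  refine ⟨?_, key⟩
  nlinarith [key, hs2]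
end

section
/- Let N ≥ 2 be an integer and let d₁ ≤ d₂ ≤ … ≤ d_{N+1} be positive integers satisfying the strict inequality d₁ + d₂ + … + d_N > (N−1)·d_{N+1}. Then for every integer i with 1 ≤ i ≤ N−1 one has the strict inequality N·(d₁ + … + d_{i+1}) > i·(d₁ + … + d_{N+1}). -/
/--
Let `N ≥ 2` and let `d 1 ≤ d 2 ≤ … ≤ d (N+1)` be positive integers satisfying the strict
inequality `d 1 + ⋯ + d N > (N−1) · d (N+1)`. Then for every `i` with `1 ≤ i ≤ N−1` one has
the strict inequality `N·(d 1 + ⋯ + d (i+1)) > i·(d 1 + ⋯ + d (N+1))`.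
-/
theorem stmt1 (N : ℕ) (hN : 2 ≤ N) (d : ℕ → ℤ)
    (hpos : ∀ k, 1 ≤ k → k ≤ N + 1 → 0 < d k)
    (hmono : ∀ j k, 1 ≤ j → j ≤ k → k ≤ N + 1 → d j ≤ d k)
    (hsum : ((N : ℤ) - 1) * d (N + 1) < ∑ k ∈ Finset.Icc 1 N, d k) :
    ∀ i : ℕ, 1 ≤ i → i ≤ N - 1 →
      (i : ℤ) * ∑ k ∈ Finset.Icc 1 (N + 1), d k <
        (N : ℤ) * ∑ k ∈ Finset.Icc 1 (i + 1), d k := by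
  intro i hi1 hi2
  have hiN : i + 1 ≤ N := by omega
  -- rewrite Icc 1 m as Ioc 0 m
  have hIcc : ∀ m : ℕ, Finset.Icc 1 m = Finset.Ioc 0 m := by
    intro m; ext x; simp [Nat.lt_iff_add_one_le]
  -- key bound on tails
  have key : ∀ a b : ℕ, a ≤ b → b ≤ N + 1 →
      (∑ k ∈ Finset.Ioc a b, d k) ≤ ((b : ℤ) - a) * d (N + 1) := by
    intro a b hab hbN
    have h1 : (∑ k ∈ Finset.Ioc a b, d k) ≤ ∑ _k ∈ Finset.Ioc a b, d (N + 1) := by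
      apply Finset.sum_le_sum
      intro k hk
      simp only [Finset.mem_Ioc] at hk
      exact hmono k (N + 1) (by omega) (by omega) le_rfl
    have h2 : (∑ _k ∈ Finset.Ioc a b, d (N + 1)) = ((b : ℤ) - a) * d (N + 1) := by
      rw [Finset.sum_const, Nat.card_Ioc, nsmul_eq_mul]
      congr 1
      push_cast [Nat.cast_sub hab]
      ring
    omega
  -- split the sums
  have split1 : (∑ k ∈ Finset.Ioc 0 (N + 1), d k) =
      (∑ k ∈ Finset.Ioc 0 (i + 1), d k) + ∑ k ∈ Finset.Ioc (i + 1) (N + 1), d k := by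
    rw [Finset.sum_Ioc_consecutive _ (by omega) (by omega)]
  have split2 : (∑ k ∈ Finset.Ioc 0 N, d k) =
      (∑ k ∈ Finset.Ioc 0 (i + 1), d k) + ∑ k ∈ Finset.Ioc (i + 1) N, d k := by
    rw [Finset.sum_Ioc_consecutive _ (by omega) (by omega)]
  set A := ∑ k ∈ Finset.Ioc 0 (i + 1), d k with hA
  set T := ∑ k ∈ Finset.Ioc (i + 1) (N + 1), d k with hT
  have h3 : (∑ k ∈ Finset.Ioc (i + 1) N, d k) ≤ ((N : ℤ) - (i + 1)) * d (N + 1) := by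
    have := key (i + 1) N hiN (by omega)
    push_cast at this ⊢
    linarith
  have h4 : T ≤ ((N : ℤ) - i) * d (N + 1) := by
    have := key (i + 1) (N + 1) (by omega) le_rfl
    push_cast at this ⊢
    linarith
  rw [hIcc] at hsum
  rw [split2] at hsum
  -- A > i * d (N+1)
  have hAgt : (i : ℤ) * d (N + 1) < A := by
    have hi' : (1 : ℤ) ≤ (i : ℤ) := by exact_mod_cast hi1
    nlinarith [h3, hsum]
  rw [hIcc, hIcc, split1]
  have hNi : (1 : ℤ) ≤ (N : ℤ) - i := by
    have : (i : ℤ) + 1 ≤ (N : ℤ) := by exact_mod_cast hiN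
    linarith
  have hi' : (1 : ℤ) ≤ (i : ℤ) := by exact_mod_cast hi1
  nlinarith [mul_le_mul_of_nonneg_left h4 (by linarith : (0:ℤ) ≤ (i:ℤ)),
    mul_lt_mul_of_pos_left hAgt (by linarith : (0:ℤ) < (N:ℤ) - i)]
end

section
/- Let R be a commutative ring and let 0 → E → F →^φ G → 0 be a split short exact sequence of R-modules. Then for every integer q ≥ 1 the induced map E^{⊗q} → F^{⊗q} on q-fold tensor powers is injective, and its image equals the intersection over p = 1, …, q of the kernels of the maps id_F^{⊗(p−1)} ⊗ φ ⊗ id_F^{⊗(q−p)} : F^{⊗q} → F^{⊗(p−1)} ⊗ G ⊗ F^{⊗(q−p)}. Equivalently, the sequence 0 → E^{⊗q} → F^{⊗q} → ⊕_{p=1}^{q} F^{⊗(p−1)} ⊗ G ⊗ F^{⊗(q−p)} is exact, where the p-th component of the last map applies φ in the p-th tensor factor. -/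
open scoped TensorProduct

open PiTensorProduct in
private lemma aux_step {R F G : Type*} [CommRing R]
    [AddCommGroup F] [AddCommGroup G] [Module R F] [Module R G]
    (φ : F →ₗ[R] G) (P : F →ₗ[R] F) (s : G →ₗ[R] F)
    (hPs : ∀ f : F, f - P f = s (φ f))
    (n : ℕ) (p : Fin (n + 1))
    (ψp : (⨂[R]^(n + 1) F) →ₗ[R] (⨂[R]^(p : ℕ) F) ⊗[R] (G ⊗[R] ⨂[R]^(n - (p : ℕ)) F))
    (hψp : ∀ (v : Fin (n + 1) → F),
      ψp (tprod R v) =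
        (tprod R (fun j : Fin (p : ℕ) => v ⟨j.1, j.2.trans p.2⟩)) ⊗ₜ[R]
          (φ (v p) ⊗ₜ[R]
            tprod R
              (fun j : Fin (n - (p : ℕ)) =>
                v ⟨p.1 + 1 + j.1, by have h2 := p.2; have h1 := j.2; omega⟩)))
    (x : ⨂[R]^(n + 1) F) (hx : ψp x = 0) :
    PiTensorProduct.map (fun j : Fin (n + 1) =>
        if (j : ℕ) < (p : ℕ) then P else LinearMap.id) x =
      PiTensorProduct.map (fun j : Fin (n + 1) =>
        if (j : ℕ) < (p : ℕ) + 1 then P else LinearMap.id) x := by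
  have hp : (p : ℕ) ≤ n := Nat.lt_succ_iff.mp p.2
  let ep : (Fin (p : ℕ) ⊕ (Fin 1 ⊕ Fin (n - (p : ℕ)))) ≃ Fin (n + 1) :=
    ((Equiv.sumCongr (Equiv.refl (Fin (p : ℕ))) finSumFinEquiv).trans
      finSumFinEquiv).trans (finCongr (by omega))
  let L : ((⨂[R]^(p : ℕ) F) ⊗[R] (G ⊗[R] ⨂[R]^(n - (p : ℕ)) F)) →ₗ[R] ⨂[R]^(n + 1) F :=
    (PiTensorProduct.reindex R (fun _ => F) ep).toLinearMap ∘ₗ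
      (PiTensorProduct.tmulEquiv R F).toLinearMap ∘ₗ
      TensorProduct.map (PiTensorProduct.map fun _ => P)
        ((PiTensorProduct.tmulEquiv R F).toLinearMap ∘ₗ
          TensorProduct.map
            (((PiTensorProduct.subsingletonEquiv (0 : Fin 1)) :
                (⨂[R] _ : Fin 1, F) ≃ₗ[R] F).symm.toLinearMap ∘ₗ s)
            (LinearMap.id))
  have hsub : ∀ m : F, ((PiTensorProduct.subsingletonEquiv (0 : Fin 1)) :
      (⨂[R] _ : Fin 1, F) ≃ₗ[R] F).symm m = tprod R (fun _ : Fin 1 => m) := by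
    intro m
    rw [LinearEquiv.symm_apply_eq, PiTensorProduct.subsingletonEquiv_apply_tprod]
  have key :
      (PiTensorProduct.map (fun j : Fin (n + 1) =>
          if (j : ℕ) < (p : ℕ) then P else LinearMap.id) :
            (⨂[R]^(n + 1) F) →ₗ[R] ⨂[R]^(n + 1) F) -
        PiTensorProduct.map (fun j : Fin (n + 1) =>
          if (j : ℕ) < (p : ℕ) + 1 then P else LinearMap.id) =
      L ∘ₗ ψp := by
    ext v
    simp only [LinearMap.compMultilinearMap_apply, LinearMap.sub_apply, LinearMap.coe_comp,
      Function.comp_apply, PiTensorProduct.map_tprod, hψp, L, TensorProduct.map_tmul,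
      LinearEquiv.coe_coe, hsub, LinearMap.id_coe, id_eq, PiTensorProduct.tmulEquiv_apply,
      PiTensorProduct.reindex_tprod]
    set base : Fin (n + 1) → F := fun j => if (j : ℕ) < (p : ℕ) then P (v j) else v j with hbase
    have h1 : (fun j : Fin (n + 1) =>
        (if (j : ℕ) < (p : ℕ) then P else LinearMap.id) (v j)) =
        Function.update base p (v p) := by
      funext j
      rcases eq_or_ne j p with rfl | hj
      · simp [base]
      · rw [Function.update_of_ne hj, hbase]
        by_cases hlt : (j : ℕ) < (p : ℕ) <;> simp [hlt]
    have h2 : (fun j : Fin (n + 1) =>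
        (if (j : ℕ) < (p : ℕ) + 1 then P else LinearMap.id) (v j)) =
        Function.update base p (P (v p)) := by
      funext j
      rcases eq_or_ne j p with rfl | hj
      · simp [base]
      · rw [Function.update_of_ne hj, hbase]
        have hne : (j : ℕ) ≠ (p : ℕ) := fun h => hj (Fin.ext h)
        by_cases hlt : (j : ℕ) < (p : ℕ)
        · simp [hlt, show (j : ℕ) < (p : ℕ) + 1 by omega]
        · simp [hlt, show ¬ (j : ℕ) < (p : ℕ) + 1 by omega]
    rw [h1, h2, ← MultilinearMap.map_update_sub, hPs]
    refine congrArg (PiTensorProduct.tprod R) (funext fun j => ?_)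
    obtain ⟨y, rfl⟩ : ∃ y, j = ep y := ⟨ep.symm j, (ep.apply_symm_apply j).symm⟩
    rw [Equiv.symm_apply_apply]
    have hep1 : ∀ k : Fin (p : ℕ), ((ep (Sum.inl k)) : ℕ) = k.1 := by
      intro k; simp [ep]
    have hep2 : ∀ z : Fin 1, ((ep (Sum.inr (Sum.inl z))) : ℕ) = p.1 := by
      intro z
      have : z = 0 := Subsingleton.elim _ _
      subst this
      simp [ep]
    have hep3 : ∀ k : Fin (n - (p : ℕ)),
        ((ep (Sum.inr (Sum.inr k))) : ℕ) = p.1 + 1 + k.1 := by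
      intro k; simp [ep]; omega
    rcases y with k | z | k
    · have hval := hep1 k
      have hne : ep (Sum.inl k) ≠ p := by
        intro h; rw [h] at hval; omega
      rw [Function.update_of_ne hne, hbase]
      have hlt : ((ep (Sum.inl k)) : ℕ) < (p : ℕ) := by rw [hval]; exact k.2
      beta_reduce
      rw [if_pos hlt]
      have : ep (Sum.inl k) = ⟨k.1, k.2.trans p.2⟩ := Fin.ext hval
      rw [this]
      rfl
    · have hval := hep2 z
      have : ep (Sum.inr (Sum.inl z)) = p := Fin.ext hval
      rw [this, Function.update_self]
      rfl
    · have hval := hep3 k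
      have hne : ep (Sum.inr (Sum.inr k)) ≠ p := by
        intro h; rw [h] at hval; omega
      rw [Function.update_of_ne hne, hbase]
      have hlt : ¬ ((ep (Sum.inr (Sum.inr k))) : ℕ) < (p : ℕ) := by rw [hval]; omega
      beta_reduce
      rw [if_neg hlt]
      have : ep (Sum.inr (Sum.inr k)) =
          ⟨p.1 + 1 + k.1, by have h1 := k.2; have h2 := p.2; omega⟩ := Fin.ext hval
      rw [this]
      rfl
  have := LinearMap.congr_fun key x
  rw [LinearMap.comp_apply, hx, map_zero, LinearMap.sub_apply, sub_eq_zero] at this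
  exact this

/--
Let `0 → E → F →^φ G → 0` be a split short exact sequence of `R`-modules. Then for
every `q = n+1 ≥ 1` the induced map `E^{⊗q} → F^{⊗q}` on `q`-fold tensor powers is
injective and its image equals the intersection over `p` of the kernels of the maps
`id^{⊗p} ⊗ φ ⊗ id^{⊗(q−1−p)} : F^{⊗q} → F^{⊗p} ⊗ (G ⊗ F^{⊗(q−1−p)})` (here `p` is
zero-indexed, `ψ p` being the map applying `φ` in the `p`-th tensor factor).
-/
theorem stmt4 {R E F G : Type*} [CommRing R]
    [AddCommGroup E] [AddCommGroup F] [AddCommGroup G]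
    [Module R E] [Module R F] [Module R G]
    (i : E →ₗ[R] F) (φ : F →ₗ[R] G)
    (hinj : Function.Injective i) (hsurj : Function.Surjective φ)
    (hexact : LinearMap.range i = LinearMap.ker φ)
    (hsplit : ∃ C : Submodule R F, IsCompl (LinearMap.range i) C)
    (n : ℕ)
    (ψ : (p : Fin (n + 1)) →
      (⨂[R]^(n + 1) F) →ₗ[R] (⨂[R]^(p : ℕ) F) ⊗[R] (G ⊗[R] ⨂[R]^(n - (p : ℕ)) F))
    (hψ : ∀ (p : Fin (n + 1)) (v : Fin (n + 1) → F),
      ψ p (PiTensorProduct.tprod R v) =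
        (PiTensorProduct.tprod R (fun j : Fin (p : ℕ) => v ⟨j.1, j.2.trans p.2⟩)) ⊗ₜ[R]
          (φ (v p) ⊗ₜ[R]
            PiTensorProduct.tprod R
              (fun j : Fin (n - (p : ℕ)) =>
                v ⟨p.1 + 1 + j.1, by have h1 := j.2; have h2 := p.2; omega⟩))) :
    Function.Injective
        (PiTensorProduct.map (fun _ : Fin (n + 1) => i) :
          (⨂[R]^(n + 1) E) →ₗ[R] ⨂[R]^(n + 1) F) ∧
      LinearMap.range
          (PiTensorProduct.map (fun _ : Fin (n + 1) => i) :
            (⨂[R]^(n + 1) E) →ₗ[R] ⨂[R]^(n + 1) F) =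
        ⨅ p : Fin (n + 1), LinearMap.ker (ψ p) := by
  classical
  obtain ⟨C, hC⟩ := hsplit
  -- construct the retraction r of i
  set pr1 := (LinearMap.range i).linearProjOfIsCompl C hC with hpr1
  set eE := LinearEquiv.ofInjective i hinj with heE
  set r : F →ₗ[R] E := eE.symm.toLinearMap ∘ₗ pr1 with hr
  have hri : ∀ x : E, r (i x) = x := by
    intro x
    have h1 : pr1 (i x) = ⟨i x, LinearMap.mem_range_self i x⟩ :=
      Submodule.linearProjOfIsCompl_apply_left hC ⟨i x, LinearMap.mem_range_self i x⟩
    have h2 : eE x = ⟨i x, LinearMap.mem_range_self i x⟩ :=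
      Subtype.ext (by simp [heE, LinearEquiv.ofInjective_apply])
    simp [hr, h1, ← h2]
  set P : F →ₗ[R] F := i ∘ₗ r with hPdef
  have hir : ∀ y : F, P y = ↑(pr1 y) := by
    intro y
    have : i (eE.symm (pr1 y)) = ↑(eE (eE.symm (pr1 y))) := by
      rw [LinearEquiv.ofInjective_apply]
    simp only [hPdef, hr, LinearMap.coe_comp, Function.comp_apply, LinearEquiv.coe_coe]
    rw [this, LinearEquiv.apply_symm_apply]
  have hφi : ∀ x : E, φ (i x) = 0 := by
    intro x
    have : i x ∈ LinearMap.ker φ := hexact ▸ LinearMap.mem_range_self i x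
    exact this
  -- construct the section s of φ with image C
  have hφC_bij : Function.Bijective (φ ∘ₗ C.subtype) := by
    constructor
    · intro a b hab
      have hker : (↑a - ↑b : F) ∈ LinearMap.ker φ := by
        simp only [LinearMap.mem_ker, map_sub]
        simpa [sub_eq_zero] using hab
      have hmem : (↑a - ↑b : F) ∈ (LinearMap.range i) ⊓ C :=
        ⟨hexact ▸ hker, C.sub_mem a.2 b.2⟩
      rw [hC.inf_eq_bot, Submodule.mem_bot] at hmem
      exact Subtype.ext (sub_eq_zero.mp hmem)
    · intro g
      obtain ⟨f, rfl⟩ := hsurj g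
      refine ⟨C.linearProjOfIsCompl _ hC.symm f, ?_⟩
      have hsum : (↑(pr1 f) : F) + ↑(C.linearProjOfIsCompl _ hC.symm f) = f :=
        Submodule.projection_add_projection_eq_self hC f
      have h0 : φ ↑(pr1 f) = 0 := by
        obtain ⟨e0, he0⟩ := (pr1 f).2
        rw [← he0]
        exact hφi e0
      simp only [LinearMap.coe_comp, Function.comp_apply, Submodule.coe_subtype]
      calc φ ↑(C.linearProjOfIsCompl _ hC.symm f) = 0 + φ ↑(C.linearProjOfIsCompl _ hC.symm f) := by
            rw [zero_add]
        _ = φ ↑(pr1 f) + φ ↑(C.linearProjOfIsCompl _ hC.symm f) := by rw [h0]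
        _ = φ f := by rw [← map_add, hsum]
  set eC := LinearEquiv.ofBijective (φ ∘ₗ C.subtype) hφC_bij with heC
  set s : G →ₗ[R] F := C.subtype ∘ₗ eC.symm.toLinearMap with hs
  have hkey : ∀ f : F, f - P f = s (φ f) := by
    intro f
    set c := C.linearProjOfIsCompl _ hC.symm f with hc
    have hsum : (↑(pr1 f) : F) + ↑c = f :=
      Submodule.projection_add_projection_eq_self hC f
    have h0 : φ ↑(pr1 f) = 0 := by
      obtain ⟨e0, he0⟩ := (pr1 f).2
      rw [← he0]
      exact hφi e0
    have hφf : φ f = φ ↑c := by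
      conv_lhs => rw [← hsum]
      rw [map_add, h0, zero_add]
    have hsc : s (φ ↑c) = ↑c := by
      have h1 : φ ↑c = eC c := by rw [heC, LinearEquiv.ofBijective_apply]; rfl
      simp [hs, h1]
    have hcf : (↑c : F) = f - ↑(pr1 f) := by
      rw [eq_sub_iff_add_eq, add_comm]
      exact hsum
    rw [hφf, hsc, hir, hcf]
  -- injectivity
  have hleft : (PiTensorProduct.map (fun _ : Fin (n + 1) => r)) ∘ₗ
      (PiTensorProduct.map (fun _ : Fin (n + 1) => i)) = LinearMap.id := by
    rw [← PiTensorProduct.map_comp]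
    have : (fun _ : Fin (n + 1) => r ∘ₗ i) = fun _ : Fin (n + 1) => (LinearMap.id : E →ₗ[R] E) :=
      funext fun _ => LinearMap.ext hri
    rw [this, PiTensorProduct.map_id]
  have hinj' : Function.Injective
      (PiTensorProduct.map (fun _ : Fin (n + 1) => i) :
        (⨂[R]^(n + 1) E) →ₗ[R] ⨂[R]^(n + 1) F) := by
    intro a b hab
    have ha := LinearMap.congr_fun hleft a
    have hb := LinearMap.congr_fun hleft b
    simp only [LinearMap.coe_comp, Function.comp_apply, LinearMap.id_apply] at ha hb
    rw [← ha, ← hb, hab]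
  refine ⟨hinj', le_antisymm ?_ ?_⟩
  · -- range ⊆ ⋂ ker
    rintro _ ⟨y, rfl⟩
    rw [Submodule.mem_iInf]
    intro p
    rw [LinearMap.mem_ker]
    have hcomp : (ψ p) ∘ₗ (PiTensorProduct.map (fun _ : Fin (n + 1) => i)) = 0 := by
      ext v
      simp only [LinearMap.compMultilinearMap_apply, LinearMap.coe_comp, Function.comp_apply,
        PiTensorProduct.map_tprod, hψ, hφi, TensorProduct.zero_tmul, TensorProduct.tmul_zero,
        LinearMap.zero_apply, LinearMap.zero_comp]
    exact LinearMap.congr_fun hcomp y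
  · -- ⋂ ker ⊆ range
    intro x hx
    have hxp : ∀ p : Fin (n + 1), ψ p x = 0 := by
      intro p
      have := (Submodule.mem_iInf _).mp hx p
      exact this
    have step : ∀ k : ℕ, (hk : k ≤ n + 1) →
        PiTensorProduct.map (fun j : Fin (n + 1) =>
          if (j : ℕ) < k then P else LinearMap.id) x = x := by
      intro k
      induction k with
      | zero =>
        intro _
        have : (fun j : Fin (n + 1) => if (j : ℕ) < 0 then P else LinearMap.id) =
            fun _ : Fin (n + 1) => (LinearMap.id : F →ₗ[R] F) := by
          funext j; simp
        rw [this, PiTensorProduct.map_id, LinearMap.id_apply]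
      | succ k ih =>
        intro hk
        have hk' : k < n + 1 := hk
        have := aux_step φ P s hkey n ⟨k, hk'⟩ (ψ ⟨k, hk'⟩) (hψ ⟨k, hk'⟩) x (hxp ⟨k, hk'⟩)
        simp only [Fin.val_mk] at this
        rw [← this]
        exact ih (le_of_lt hk')
    have hfin : PiTensorProduct.map (fun _ : Fin (n + 1) => P) x = x := by
      have := step (n + 1) le_rfl
      have heq : (fun j : Fin (n + 1) => if (j : ℕ) < n + 1 then P else LinearMap.id) =
          fun _ : Fin (n + 1) => P := by
        funext j; rw [if_pos j.isLt]
      rw [heq] at this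
      exact this
    have hcomp : (PiTensorProduct.map (fun _ : Fin (n + 1) => P) :
        (⨂[R]^(n + 1) F) →ₗ[R] ⨂[R]^(n + 1) F) =
        (PiTensorProduct.map (fun _ : Fin (n + 1) => i)) ∘ₗ
          (PiTensorProduct.map (fun _ : Fin (n + 1) => r)) := by
      rw [← PiTensorProduct.map_comp]
    refine ⟨PiTensorProduct.map (fun _ : Fin (n + 1) => r) x, ?_⟩
    rw [← LinearMap.comp_apply, ← hcomp, hfin]
end

section
/- Let R be a commutative ring containing the field ℚ and let 0 → E → F →^φ G → 0 be a split short exact sequence of R-modules. For an integer q ≥ 1, let d : S^q F → G ⊗ S^{q−1} F be the R-linear map determined by d(f₁·f₂·…·f_q) = Σ_{k=1}^{q} φ(f_k) ⊗ (f₁·…·f̂_k·…·f_q), where f̂_k means that the factor f_k is omitted. Then the sequence 0 → S^q E → S^q F →^d G ⊗ S^{q−1} F is exact; that is, the map S^q E → S^q F induced by the inclusion E ⊆ F is injective and its image equals the kernel of d. -/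
open scoped TensorProduct

/-- The submodule of relations defining the `q`-th symmetric power of a module:
the span of the differences of a pure tensor and any of its permutations. -/
noncomputable def symPowRel (R : Type*) [CommRing R] (M : Type*) [AddCommGroup M]
    [Module R M] (q : ℕ) : Submodule R (⨂[R]^q M) :=
  Submodule.span R
    {x | ∃ (v : Fin q → M) (σ : Equiv.Perm (Fin q)),
      x = PiTensorProduct.tprod R v - PiTensorProduct.tprod R (fun j => v (σ j))}

/-- The `q`-th symmetric power of an `R`-module `M`: the quotient of the `q`-fold
tensor power by the relations identifying permuted tensors. -/
abbrev SymPow (R : Type*) [CommRing R] (M : Type*) [AddCommGroup M] [Module R M]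
    (q : ℕ) : Type _ :=
  (⨂[R]^q M) ⧸ symPowRel R M q

/-- The product `v 0 · v 1 · … · v (q-1)` in the `q`-th symmetric power, i.e. the class
of the pure tensor `v 0 ⊗ ⋯ ⊗ v (q-1)`. -/
noncomputable def symPowMk (R : Type*) [CommRing R] {M : Type*} [AddCommGroup M]
    [Module R M] (q : ℕ) (v : Fin q → M) : SymPow R M q :=
  Submodule.Quotient.mk (PiTensorProduct.tprod R v)

namespace SymPowAux

open PiTensorProduct

variable {R : Type*} [CommRing R] {M N : Type*} [AddCommGroup M] [Module R M]
  [AddCommGroup N] [Module R N]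

lemma symPowMk_span (q : ℕ) :
    Submodule.span R (Set.range (symPowMk R (M := M) q)) = ⊤ := by
  have : Set.range (symPowMk R (M := M) q)
      = (symPowRel R M q).mkQ '' (Set.range (tprod R)) := by
    ext x
    simp only [Set.mem_range, Set.mem_image, symPowMk]
    constructor
    · rintro ⟨v, rfl⟩; exact ⟨tprod R v, ⟨v, rfl⟩, rfl⟩
    · rintro ⟨y, ⟨v, rfl⟩, rfl⟩; exact ⟨v, rfl⟩
  rw [this, ← Submodule.map_span, span_tprod_eq_top, Submodule.map_top,
    Submodule.range_mkQ]

lemma symPowMk_perm (q : ℕ) (v : Fin q → M) (σ : Equiv.Perm (Fin q)) :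
    symPowMk R q v = symPowMk R q (fun j => v (σ j)) :=
  (Submodule.Quotient.eq _).mpr (Submodule.subset_span ⟨v, σ, rfl⟩)

lemma symPowMk_coord_zero (q : ℕ) (v : Fin q → M) (k : Fin q) (h : v k = 0) :
    symPowMk R q v = 0 := by
  unfold symPowMk
  rw [MultilinearMap.map_coord_zero _ k h, Submodule.Quotient.mk_zero]

/-- Functoriality of the symmetric power. -/
noncomputable def symPowMap (f : M →ₗ[R] N) (q : ℕ) :
    SymPow R M q →ₗ[R] SymPow R N q :=
  Submodule.mapQ _ _ (PiTensorProduct.map fun _ => f) (by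
    rw [symPowRel, Submodule.span_le]
    rintro _ ⟨v, σ, rfl⟩
    simp only [SetLike.mem_coe, Submodule.mem_comap, map_sub, map_tprod]
    exact Submodule.subset_span ⟨fun k => f (v k), σ, rfl⟩)

lemma symPowMap_mk (f : M →ₗ[R] N) (q : ℕ) (v : Fin q → M) :
    symPowMap f q (symPowMk R q v) = symPowMk R q (fun k => f (v k)) := by
  simp [symPowMap, symPowMk, Submodule.mapQ_apply]

/-- The tensor-power level operator applying `u` in each slot and summing. -/
noncomputable def DOp (u : M →ₗ[R] M) (q : ℕ) : (⨂[R]^q M) →ₗ[R] (⨂[R]^q M) :=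
  ∑ k : Fin q, PiTensorProduct.map (fun j => if j = k then u else LinearMap.id)

lemma DOp_tprod (u : M →ₗ[R] M) (q : ℕ) (v : Fin q → M) :
    DOp u q (tprod R v)
      = ∑ k : Fin q, tprod R (fun j => if j = k then u (v j) else v j) := by
  simp only [DOp, LinearMap.sum_apply, map_tprod]
  refine Finset.sum_congr rfl fun k _ => ?_
  congr 1; funext j; split <;> simp

lemma DOp_rel (u : M →ₗ[R] M) (q : ℕ) :
    symPowRel R M q ≤ (symPowRel R M q).comap (DOp u q) := by
  rw [symPowRel, Submodule.span_le]
  rintro _ ⟨v, σ, rfl⟩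
  simp only [SetLike.mem_coe, Submodule.mem_comap, map_sub, DOp_tprod]
  set w : Fin q → Fin q → M := fun m j => if j = m then u (v j) else v j with hw
  have hB : ∀ k : Fin q, (fun j => if j = k then u (v (σ j)) else v (σ j))
      = fun j => w (σ k) (σ j) := by
    intro k; funext j
    simp only [hw, EmbeddingLike.apply_eq_iff_eq]
  have hsplit : (∑ k : Fin q, (tprod R (fun j => if j = k then u (v j) else v j) : ⨂[R]^q M))
        - ∑ k : Fin q, (tprod R (fun j => if j = k then u (v (σ j)) else v (σ j)) : ⨂[R]^q M)
      = ∑ k : Fin q, ((tprod R (w (σ k)) : ⨂[R]^q M)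
        - tprod R (fun j => w (σ k) (σ j))) := by
    rw [Finset.sum_sub_distrib]
    congr 1
    · exact (Equiv.sum_comp σ fun k => (tprod R (w k) : ⨂[R]^q M)).symm
    · exact Finset.sum_congr rfl fun k _ => congrArg _ (hB k)
  rw [hsplit]
  exact Submodule.sum_mem _ fun k _ => Submodule.subset_span ⟨w (σ k), σ, rfl⟩

/-- The slot-wise operator on the symmetric power. -/
noncomputable def eOp (u : M →ₗ[R] M) (q : ℕ) : SymPow R M q →ₗ[R] SymPow R M q :=
  Submodule.mapQ _ _ (DOp u q) (DOp_rel u q)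

lemma eOp_mk (u : M →ₗ[R] M) (q : ℕ) (v : Fin q → M) :
    eOp u q (symPowMk R q v)
      = ∑ k : Fin q, symPowMk R q (fun j => if j = k then u (v j) else v j) := by
  simp only [eOp, symPowMk, Submodule.mapQ_apply, DOp_tprod]
  rw [← Submodule.mkQ_apply, map_sum]
  rfl

/-- Left multiplication by an element on the tensor power. -/
noncomputable def consMap (q : ℕ) (f : M) : (⨂[R]^q M) →ₗ[R] ⨂[R]^(q + 1) M :=
  PiTensorProduct.lift ((tprod R (s := fun _ : Fin (q+1) => M)).curryLeft f)

lemma consMap_tprod (q : ℕ) (f : M) (v : Fin q → M) :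
    consMap q f (PiTensorProduct.tprod R v) = PiTensorProduct.tprod R (Fin.cons f v) := by
  simp [consMap, MultilinearMap.curryLeft_apply]

lemma consMap_rel (q : ℕ) (f : M) :
    symPowRel R M q ≤ (symPowRel R M (q+1)).comap (consMap q f) := by
  rw [symPowRel, Submodule.span_le]
  rintro _ ⟨v, σ, rfl⟩
  simp only [SetLike.mem_coe, Submodule.mem_comap, map_sub, consMap_tprod]
  set σ' : Equiv.Perm (Fin (q+1)) :=
    Equiv.permCongr (finSuccEquiv q).symm σ.optionCongr with hσ'
  have key : (Fin.cons f (fun j => v (σ j)) : Fin (q+1) → M)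
      = fun j => (Fin.cons f v : Fin (q+1) → M) (σ' j) := by
    funext j
    refine Fin.cases ?_ (fun l => ?_) j
    · have : σ' 0 = 0 := by simp [hσ', Equiv.permCongr_apply]
      rw [this]; simp
    · have : σ' l.succ = (σ l).succ := by simp [hσ', Equiv.permCongr_apply]
      rw [this]; simp
  rw [key]
  exact Submodule.subset_span ⟨Fin.cons f v, σ', rfl⟩

/-- Left multiplication on the symmetric power, as a bilinear map. -/
noncomputable def consMapQ (q : ℕ) : M →ₗ[R] SymPow R M q →ₗ[R] SymPow R M (q + 1) where
  toFun f := Submodule.mapQ _ _ (consMap q f) (consMap_rel q f)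
  map_add' f g := by
    refine Submodule.linearMap_qext _ (LinearMap.ext fun x => ?_)
    have : consMap (R := R) (M := M) q (f + g) x = consMap q f x + consMap q g x := by
      have hx : x ∈ (⊤ : Submodule R (⨂[R]^q M)) := trivial
      rw [← span_tprod_eq_top] at hx
      induction hx using Submodule.span_induction with
      | mem y hy =>
        obtain ⟨v, rfl⟩ := hy
        simp only [consMap_tprod]
        exact MultilinearMap.cons_add (tprod R (s := fun _ : Fin (q+1) => M)) v f g
      | zero => simp
      | add y z _ _ hy hz => simp only [map_add, hy, hz]; abel
      | smul c y _ hy => simp only [map_smul, hy, smul_add]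
    simp [Submodule.mapQ_apply, this]
  map_smul' c f := by
    refine Submodule.linearMap_qext _ (LinearMap.ext fun x => ?_)
    have : consMap (R := R) (M := M) q (c • f) x = c • consMap q f x := by
      have hx : x ∈ (⊤ : Submodule R (⨂[R]^q M)) := trivial
      rw [← span_tprod_eq_top] at hx
      induction hx using Submodule.span_induction with
      | mem y hy =>
        obtain ⟨v, rfl⟩ := hy
        simp only [consMap_tprod]
        exact MultilinearMap.cons_smul (tprod R (s := fun _ : Fin (q+1) => M)) v c f
      | zero => simp
      | add y z _ _ hy hz => simp only [map_add, hy, hz, smul_add]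
      | smul a y _ hy => simp only [map_smul, hy, smul_comm c a]
    simp [Submodule.mapQ_apply, this]

lemma consMapQ_mk (q : ℕ) (f : M) (v : Fin q → M) :
    consMapQ q f (symPowMk R q v) = symPowMk R (q+1) (Fin.cons f v) := by
  simp [consMapQ, symPowMk, Submodule.mapQ_apply, consMap_tprod]

section Eigen

variable (t : M →ₗ[R] M)

/-- The span of classes of pure tensors having exactly `b` slots fixed by `t` and the
remaining slots killed by `t`. -/
noncomputable def VSub (q : ℕ) (b : ℕ) : Submodule R (SymPow R M q) :=
  Submodule.span R {x | ∃ (v : Fin q → M) (K : Finset (Fin q)), K.card = b ∧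
    (∀ k ∈ K, t (v k) = v k) ∧ (∀ k ∉ K, t (v k) = 0) ∧ x = symPowMk R q v}

lemma VSub_eigen (q b : ℕ) : ∀ x ∈ VSub t q b, eOp t q x = (b : R) • x := by
  have : VSub t q b ≤ LinearMap.ker (eOp t q - (b : R) • LinearMap.id) := by
    rw [VSub, Submodule.span_le]
    rintro x ⟨v, K, hcard, hK, hKc, rfl⟩
    simp only [SetLike.mem_coe, LinearMap.mem_ker, LinearMap.sub_apply,
      LinearMap.smul_apply, LinearMap.id_apply, sub_eq_zero]
    have hterm : ∀ k : Fin q, symPowMk R q (fun j => if j = k then t (v j) else v j)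
        = if k ∈ K then symPowMk R q v else 0 := by
      intro k; by_cases hk : k ∈ K
      · rw [if_pos hk]
        congr 1; funext jj
        by_cases hj' : jj = k
        · subst hj'; simp [hK jj hk]
        · simp [hj']
      · rw [if_neg hk]
        exact symPowMk_coord_zero _ _ k (by simp [hKc k hk])
    rw [eOp_mk, Finset.sum_congr rfl fun k _ => hterm k, Finset.sum_ite_mem,
      Finset.univ_inter, Finset.sum_const, hcard]
    exact (Nat.cast_smul_eq_nsmul R b _).symm
  intro x hx
  have h := this hx
  rw [LinearMap.mem_ker, LinearMap.sub_apply, LinearMap.smul_apply, LinearMap.id_apply,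
    sub_eq_zero] at h
  exact h

lemma sup_VSub_eq_top (htt : ∀ f, t (t f) = t f) (q : ℕ) :
    (Finset.range (q + 1)).sup (VSub t q) = ⊤ := by
  rw [eq_top_iff, ← symPowMk_span (M := M) q, Submodule.span_le]
  rintro _ ⟨v, rfl⟩
  have hv : (fun k => v k - t (v k)) + (fun k => t (v k)) = v := by funext k; simp
  have hexp : symPowMk R q v
      = ∑ s : Finset (Fin q),
          symPowMk R q (s.piecewise (fun k => v k - t (v k)) (fun k => t (v k))) := by
    have h1 : PiTensorProduct.tprod R v = ∑ s : Finset (Fin q),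
        PiTensorProduct.tprod R (s.piecewise (fun k => v k - t (v k)) (fun k => t (v k))) := by
      conv_lhs => rw [← hv]
      exact MultilinearMap.map_add_univ _ _ _
    unfold symPowMk
    rw [h1, ← Submodule.mkQ_apply, map_sum]
    rfl
  rw [SetLike.mem_coe, hexp]
  refine Submodule.sum_mem _ fun s _ => ?_
  have hb : sᶜ.card < q + 1 := by
    have := Finset.card_le_univ sᶜ
    simpa [Nat.lt_succ_iff] using this
  refine (Finset.le_sup (f := VSub t q) (Finset.mem_range.mpr hb)) ?_
  refine Submodule.subset_span ⟨_, sᶜ, rfl, fun k hk => ?_, fun k hk => ?_, rfl⟩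
  · rw [Finset.piecewise_eq_of_notMem _ _ _ (Finset.mem_compl.mp hk)]
    exact htt (v k)
  · rw [Finset.piecewise_eq_of_mem _ _ _ (by simpa using hk)]
    rw [map_sub, htt, sub_self]

lemma sup_VSub_stable (q m : ℕ) :
    ∀ x ∈ (Finset.range m).sup (VSub t q), eOp t q x ∈ (Finset.range m).sup (VSub t q) := by
  induction m with
  | zero =>
    intro x hx
    simp only [Finset.range_zero, Finset.sup_empty, Submodule.mem_bot] at hx ⊢
    rw [hx, map_zero]
  | succ m ih =>
    intro x hx
    rw [Finset.range_add_one, Finset.sup_insert] at hx ⊢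
    obtain ⟨y, hy, z, hz, rfl⟩ := Submodule.mem_sup.mp hx
    rw [map_add]
    refine Submodule.add_mem _ (Submodule.mem_sup_left ?_) (Submodule.mem_sup_right (ih z hz))
    rw [VSub_eigen t q m y hy]
    exact Submodule.smul_mem _ _ hy

lemma mem_VSub_zero_of_eOp_eq_zero [Algebra ℚ R] (q : ℕ) :
    ∀ m, ∀ x ∈ (Finset.range (m + 1)).sup (VSub t q), eOp t q x = 0 → x ∈ VSub t q 0 := by
  intro m
  induction m with
  | zero =>
    intro x hx _
    simpa [Finset.range_one, Finset.sup_singleton] using hx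
  | succ m ih =>
    intro x hx hex
    rw [Finset.range_add_one, Finset.sup_insert] at hx
    obtain ⟨z, hz, y, hy, rfl⟩ := Submodule.mem_sup.mp hx
    have hz' : (((m + 1 : ℕ) : R)) • z = - eOp t q y := by
      have h0 : eOp t q z + eOp t q y = 0 := by rw [← map_add]; exact hex
      rw [VSub_eigen t q (m + 1) z hz] at h0
      have := eq_neg_of_add_eq_zero_left h0
      exact_mod_cast this
    have hu : IsUnit (((m + 1 : ℕ) : R)) := by
      have h1 : (((m + 1 : ℕ) : R)) = algebraMap ℚ R ((m + 1 : ℕ) : ℚ) := by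
        rw [map_natCast]
      rw [h1]
      exact IsUnit.map _ (isUnit_iff_ne_zero.mpr (by exact_mod_cast Nat.succ_ne_zero m))
    have h2 : (((m + 1 : ℕ) : R)) • z ∈ (Finset.range (m + 1)).sup (VSub t q) := by
      rw [hz']
      exact Submodule.neg_mem _ (sup_VSub_stable t q (m + 1) y hy)
    have h3 : z ∈ (Finset.range (m + 1)).sup (VSub t q) := by
      have h4 := Submodule.smul_mem _ ((hu.unit⁻¹ : Rˣ) : R) h2
      rwa [smul_smul, hu.val_inv_mul, one_smul] at h4
    exact ih (z + y) (Submodule.add_mem _ h3 hy) hex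

end Eigen

end SymPowAux

open SymPowAux

set_option maxHeartbeats 1000000 in
/--
Let `R` be a commutative ring containing `ℚ` and let `0 → E →^i F →^φ G → 0` be a split
short exact sequence of `R`-modules. For `q = n+1 ≥ 1`, let
`d : S^q F → G ⊗ S^{q−1} F` be the linear map determined by
`d (f₀·…·f_n) = Σ_k φ (f_k) ⊗ (f₀·…·f̂_k·…·f_n)`. Then the sequence
`0 → S^q E → S^q F →^d G ⊗ S^{q−1} F` is exact: the map `S^q E → S^q F` induced by
the inclusion is injective and its image equals the kernel of `d`.
-/
theorem stmt6 {R E F G : Type*} [CommRing R] [Algebra ℚ R]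
    [AddCommGroup E] [AddCommGroup F] [AddCommGroup G]
    [Module R E] [Module R F] [Module R G]
    (i : E →ₗ[R] F) (φ : F →ₗ[R] G)
    (hinj : Function.Injective i) (hsurj : Function.Surjective φ)
    (hexact : LinearMap.range i = LinearMap.ker φ)
    (hsplit : ∃ C : Submodule R F, IsCompl (LinearMap.range i) C)
    (n : ℕ)
    (j : SymPow R E (n + 1) →ₗ[R] SymPow R F (n + 1))
    (hj : ∀ v : Fin (n + 1) → E,
      j (symPowMk R (n + 1) v) = symPowMk R (n + 1) (fun k => i (v k)))
    (d : SymPow R F (n + 1) →ₗ[R] G ⊗[R] SymPow R F n)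
    (hd : ∀ v : Fin (n + 1) → F,
      d (symPowMk R (n + 1) v) =
        ∑ k : Fin (n + 1), φ (v k) ⊗ₜ[R] symPowMk R n (fun l => v (k.succAbove l))) :
    Function.Injective j ∧ LinearMap.range j = LinearMap.ker d := by
  classical
  obtain ⟨C, hC⟩ := hsplit
  -- the retraction r : F → E
  set r : F →ₗ[R] E := (LinearEquiv.ofInjective i hinj).symm.toLinearMap ∘ₗ
    (Submodule.linearProjOfIsCompl _ C hC) with hr_def
  have hri : ∀ x : E, r (i x) = x := by
    intro x
    have h1 : (Submodule.linearProjOfIsCompl _ C hC) (i x)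
        = ⟨i x, LinearMap.mem_range_self i x⟩ :=
      Submodule.linearProjOfIsCompl_apply_left hC ⟨i x, LinearMap.mem_range_self i x⟩
    have h2 : (⟨i x, LinearMap.mem_range_self i x⟩ : LinearMap.range i)
        = LinearEquiv.ofInjective i hinj x := by
      ext; simp [LinearEquiv.ofInjective_apply]
    rw [hr_def]
    simp only [LinearMap.coe_comp, Function.comp_apply, LinearEquiv.coe_coe]
    rw [h1, h2, LinearEquiv.symm_apply_apply]
  -- the section sm : G → F
  have hCinj : Function.Injective (φ ∘ₗ C.subtype) := by
    intro x y hxy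
    have hker : ((x - y : C) : F) ∈ LinearMap.ker φ := by
      rw [LinearMap.mem_ker]
      have hpx : φ (x : F) = φ (y : F) := hxy
      simp [hpx]
    have h0 : ((x - y : C) : F) ∈ LinearMap.range i ⊓ C :=
      Submodule.mem_inf.mpr ⟨by rw [hexact]; exact hker, (x - y).2⟩
    rw [hC.inf_eq_bot, Submodule.mem_bot] at h0
    have : x - y = 0 := Subtype.ext h0
    exact sub_eq_zero.mp this
  have hCsurj : Function.Surjective (φ ∘ₗ C.subtype) := by
    intro g
    obtain ⟨f, rfl⟩ := hsurj g
    have hf : f ∈ LinearMap.range i ⊔ C := by rw [hC.sup_eq_top]; trivial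
    obtain ⟨a, ha, c, hc, rfl⟩ := Submodule.mem_sup.mp hf
    refine ⟨⟨c, hc⟩, ?_⟩
    have ha0 : φ a = 0 := by
      rw [← LinearMap.mem_ker, ← hexact]; exact ha
    simp [ha0]
  set eCG : C ≃ₗ[R] G := LinearEquiv.ofBijective (φ ∘ₗ C.subtype) ⟨hCinj, hCsurj⟩
    with heCG
  set sm : G →ₗ[R] F := C.subtype ∘ₗ eCG.symm.toLinearMap with hsm_def
  have hsm : ∀ g, φ (sm g) = g := by
    intro g
    have h1 : φ (sm g) = (φ ∘ₗ C.subtype) (eCG.symm g) := rfl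
    have h2 : (φ ∘ₗ C.subtype) (eCG.symm g) = eCG (eCG.symm g) := rfl
    rw [h1, h2, eCG.apply_symm_apply]
  have hsm0 : ∀ g, sm g = 0 → g = 0 := by
    intro g h
    have := hsm g
    rw [h, map_zero] at this
    exact this.symm
  set t : F →ₗ[R] F := sm ∘ₗ φ with ht_def
  have ht_apply : ∀ f, t f = sm (φ f) := fun f => rfl
  have htt : ∀ f, t (t f) = t f := by
    intro f; rw [ht_apply, ht_apply, hsm]
  have htker : ∀ f, t f = 0 → f ∈ LinearMap.range i := by
    intro f h
    rw [hexact, LinearMap.mem_ker]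
    exact hsm0 _ h
  -- injectivity of j
  have hjinv : ∀ x, symPowMap r (n + 1) (j x) = x := by
    have hcomp : (symPowMap r (n + 1)).comp j = LinearMap.id := by
      apply LinearMap.ext_on (symPowMk_span (n + 1))
      rintro _ ⟨v, rfl⟩
      rw [LinearMap.comp_apply, hj v, symPowMap_mk, LinearMap.id_apply]
      congr 1
      funext k
      exact hri (v k)
    intro x
    have := LinearMap.congr_fun hcomp x
    simpa using this
  have hjinj : Function.Injective j := by
    intro a b hab
    rw [← hjinv a, hab, hjinv b]
  -- d ∘ j = 0
  have hdj : ∀ x, d (j x) = 0 := by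
    have hcomp : d.comp j = 0 := by
      apply LinearMap.ext_on (symPowMk_span (n + 1))
      rintro _ ⟨v, rfl⟩
      rw [LinearMap.comp_apply, hj v, hd]
      have h0 : ∀ k : Fin (n + 1), φ (i (v k)) = 0 := by
        intro k
        rw [← LinearMap.mem_ker, ← hexact]
        exact LinearMap.mem_range_self i (v k)
      simp [h0]
    intro x
    have := LinearMap.congr_fun hcomp x
    simpa using this
  have hrange_le : LinearMap.range j ≤ LinearMap.ker d := by
    rintro _ ⟨x, rfl⟩
    simpa [LinearMap.mem_ker] using hdj x
  -- the homotopy H with H ∘ d = eOp t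
  set H : G ⊗[R] SymPow R F n →ₗ[R] SymPow R F (n + 1) :=
    TensorProduct.lift ((consMapQ n) ∘ₗ sm) with hH
  have hHd : ∀ x, H (d x) = eOp t (n + 1) x := by
    have hcomp : H ∘ₗ d = eOp t (n + 1) := by
      apply LinearMap.ext_on (symPowMk_span (n + 1))
      rintro _ ⟨v, rfl⟩
      rw [LinearMap.comp_apply, hd v, map_sum, eOp_mk]
      refine Finset.sum_congr rfl fun k _ => ?_
      rw [hH, TensorProduct.lift.tmul]
      simp only [LinearMap.coe_comp, Function.comp_apply]
      rw [consMapQ_mk]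
      have hfun : (Fin.cons (sm (φ (v k))) (fun l => v (k.succAbove l)) : Fin (n + 1) → F)
          = fun jj => (fun jjj => if jjj = k then t (v jjj) else v jjj)
              (k.cycleRange.symm jj) := by
        funext jj
        refine Fin.cases ?_ (fun l => ?_) jj
        · simp [ht_apply]
        · simp [Fin.succAbove_ne k l]
      rw [hfun]
      exact (symPowMk_perm (n + 1) (fun jjj => if jjj = k then t (v jjj) else v jjj)
        k.cycleRange.symm).symm
    intro x
    exact LinearMap.congr_fun hcomp x
  -- exactness
  refine ⟨hjinj, le_antisymm hrange_le ?_⟩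
  intro x hx
  have hdx : d x = 0 := LinearMap.mem_ker.mp hx
  have hex : eOp t (n + 1) x = 0 := by
    rw [← hHd x, hdx, map_zero]
  have hxtop : x ∈ (Finset.range (n + 1 + 1)).sup (VSub t (n + 1)) := by
    rw [sup_VSub_eq_top t htt (n + 1)]
    trivial
  have hx0 : x ∈ VSub t (n + 1) 0 := mem_VSub_zero_of_eOp_eq_zero t (n + 1) (n + 1) x hxtop hex
  -- V_0 is contained in the range of j
  revert hx0
  have hV0 : VSub t (n + 1) 0 ≤ LinearMap.range j := by
    refine Submodule.span_le.mpr ?_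
    rintro x' ⟨v, K, hcard, hK, hKc, rfl⟩
    have hKe : K = ∅ := Finset.card_eq_zero.mp hcard
    have hmem : ∀ k, ∃ u, i u = v k := by
      intro k
      exact htker (v k) (hKc k (by simp [hKe]))
    choose u hu using hmem
    refine ⟨symPowMk R (n + 1) u, ?_⟩
    rw [hj u]
    exact congrArg (symPowMk R (n + 1)) (funext hu)
  exact fun hx0 => hV0 hx0
end

section
/- Let K be a field of characteristic 0 and R = K[X, Y, Z]. Set f₁ = X⁶ − Y⁴Z², f₂ = Y⁶ − X²Z⁴, f₃ = X⁴Y² − Z⁶, f₄ = X²Y⁴, f₅ = Y²Z⁴, f₆ = X⁴Z², f₇ = X²Y²Z². If s₁, …, s₇ ∈ R are polynomials of total degree at most 1 satisfying s₁f₁ + s₂f₂ + ⋯ + s₇f₇ = 0, then s₁ = s₂ = ⋯ = s₇ = 0. -/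
open MvPolynomial

noncomputable def M (a b c : ℕ) : Fin 3 →₀ ℕ :=
  Finsupp.single 0 a + Finsupp.single 1 b + Finsupp.single 2 c

lemma M_apply0 (a b c : ℕ) : M a b c 0 = a := by simp [M]
lemma M_apply1 (a b c : ℕ) : M a b c 1 = b := by simp [M]
lemma M_apply2 (a b c : ℕ) : M a b c 2 = c := by simp [M]

lemma eq_M (d : Fin 3 →₀ ℕ) : d = M (d 0) (d 1) (d 2) := by
  ext i; fin_cases i <;> simp [M_apply0, M_apply1, M_apply2]

lemma M_le {a b c a' b' c' : ℕ} : M a b c ≤ M a' b' c' ↔ a ≤ a' ∧ b ≤ b' ∧ c ≤ c' := by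
  constructor
  · intro h
    exact ⟨by simpa [M_apply0] using h 0, by simpa [M_apply1] using h 1,
      by simpa [M_apply2] using h 2⟩
  · rintro ⟨h1, h2, h3⟩ i
    fin_cases i <;> simp [M_apply0, M_apply1, M_apply2, *]

lemma M_sub (a b c a' b' c' : ℕ) : M a b c - M a' b' c' = M (a - a') (b - b') (c - c') := by
  ext i; fin_cases i <;> simp [Finsupp.tsub_apply, M_apply0, M_apply1, M_apply2]

lemma X_prod {K : Type*} [CommSemiring K] (a b c : ℕ) :
    (X 0 : MvPolynomial (Fin 3) K) ^ a * X 1 ^ b * X 2 ^ c = monomial (M a b c) 1 := by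
  simp [X_pow_eq_monomial, monomial_mul, M]

lemma deg_le_one_eq_zero {K : Type*} [CommSemiring K] (p : MvPolynomial (Fin 3) K)
    (hdeg : p.totalDegree ≤ 1)
    (h0 : coeff (M 0 0 0) p = 0) (h1 : coeff (M 1 0 0) p = 0)
    (h2 : coeff (M 0 1 0) p = 0) (h3 : coeff (M 0 0 1) p = 0) : p = 0 := by
  ext d
  rw [coeff_zero]
  by_cases h : d 0 + d 1 + d 2 ≤ 1
  · have hcases : (d 0 = 0 ∧ d 1 = 0 ∧ d 2 = 0) ∨ (d 0 = 1 ∧ d 1 = 0 ∧ d 2 = 0) ∨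
      (d 0 = 0 ∧ d 1 = 1 ∧ d 2 = 0) ∨ (d 0 = 0 ∧ d 1 = 0 ∧ d 2 = 1) := by omega
    have hd := eq_M d
    rcases hcases with ⟨a,b,c⟩|⟨a,b,c⟩|⟨a,b,c⟩|⟨a,b,c⟩ <;> rw [a,b,c] at hd <;> rw [hd] <;>
      assumption
  · apply coeff_eq_zero_of_totalDegree_lt
    have : ∑ i ∈ d.support, d i = d 0 + d 1 + d 2 := by
      rw [Finset.sum_subset (Finset.subset_univ _) (by simp +contextual), Fin.sum_univ_three]
    omega

lemma vec7_0 {α : Type*} (a b c d e f g : α) : ![a,b,c,d,e,f,g] 0 = a := rfl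
lemma vec7_1 {α : Type*} (a b c d e f g : α) : ![a,b,c,d,e,f,g] 1 = b := rfl
lemma vec7_2 {α : Type*} (a b c d e f g : α) : ![a,b,c,d,e,f,g] 2 = c := rfl
lemma vec7_3 {α : Type*} (a b c d e f g : α) : ![a,b,c,d,e,f,g] 3 = d := rfl
lemma vec7_4 {α : Type*} (a b c d e f g : α) : ![a,b,c,d,e,f,g] 4 = e := rfl
lemma vec7_5 {α : Type*} (a b c d e f g : α) : ![a,b,c,d,e,f,g] 5 = f := rfl
lemma vec7_6 {α : Type*} (a b c d e f g : α) : ![a,b,c,d,e,f,g] 6 = g := rfl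

/--
Let `K` be a field of characteristic `0`, `R = K[X, Y, Z]`, and
`f₁ = X⁶ − Y⁴Z², f₂ = Y⁶ − X²Z⁴, f₃ = X⁴Y² − Z⁶, f₄ = X²Y⁴, f₅ = Y²Z⁴, f₆ = X⁴Z²,
f₇ = X²Y²Z²`. If `s₁, …, s₇ ∈ R` have total degree at most `1` and satisfy
`s₁f₁ + ⋯ + s₇f₇ = 0`, then `s₁ = ⋯ = s₇ = 0`.
-/
theorem stmt10 {K : Type*} [Field K] [CharZero K]
    (f : Fin 7 → MvPolynomial (Fin 3) K)
    (hf : f = ![X 0 ^ 6 - X 1 ^ 4 * X 2 ^ 2, X 1 ^ 6 - X 0 ^ 2 * X 2 ^ 4,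
      X 0 ^ 4 * X 1 ^ 2 - X 2 ^ 6, X 0 ^ 2 * X 1 ^ 4, X 1 ^ 2 * X 2 ^ 4,
      X 0 ^ 4 * X 2 ^ 2, X 0 ^ 2 * X 1 ^ 2 * X 2 ^ 2])
    (s : Fin 7 → MvPolynomial (Fin 3) K)
    (hdeg : ∀ i, (s i).totalDegree ≤ 1)
    (hrel : ∑ i, s i * f i = 0) :
    ∀ i, s i = 0 := by
  have hrel' : s 0 * (monomial (M 6 0 0) (1:K) - monomial (M 0 4 2) 1)
      + s 1 * (monomial (M 0 6 0) 1 - monomial (M 2 0 4) 1)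
      + s 2 * (monomial (M 4 2 0) 1 - monomial (M 0 0 6) 1)
      + s 3 * monomial (M 2 4 0) 1 + s 4 * monomial (M 0 2 4) 1
      + s 5 * monomial (M 4 0 2) 1 + s 6 * monomial (M 2 2 2) 1 = 0 := by
    rw [← hrel, hf, Fin.sum_univ_seven]
    rw [← X_prod 6 0 0, ← X_prod 0 4 2, ← X_prod 0 6 0, ← X_prod 2 0 4, ← X_prod 4 2 0,
      ← X_prod 0 0 6, ← X_prod 2 4 0, ← X_prod 0 2 4, ← X_prod 4 0 2, ← X_prod 2 2 2]
    simp only [vec7_0, vec7_1, vec7_2, vec7_3, vec7_4, vec7_5, vec7_6]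
    ring
  have ext : ∀ a b c : ℕ, coeff (M a b c)
      (s 0 * (monomial (M 6 0 0) (1:K) - monomial (M 0 4 2) 1)
      + s 1 * (monomial (M 0 6 0) 1 - monomial (M 2 0 4) 1)
      + s 2 * (monomial (M 4 2 0) 1 - monomial (M 0 0 6) 1)
      + s 3 * monomial (M 2 4 0) 1 + s 4 * monomial (M 0 2 4) 1
      + s 5 * monomial (M 4 0 2) 1 + s 6 * monomial (M 2 2 2) 1) = 0 := by
    intro a b c; rw [hrel', coeff_zero]
  intro i
  fin_cases i
  · refine deg_le_one_eq_zero _ (hdeg 0) ?_ ?_ ?_ ?_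
    · have h := ext 6 0 0
      simp only [coeff_add, mul_sub, coeff_sub, coeff_mul_monomial', M_le, M_sub, coeff_zero,
        mul_one] at h
      norm_num at h; exact h
    · have h := ext 7 0 0
      simp only [coeff_add, mul_sub, coeff_sub, coeff_mul_monomial', M_le, M_sub, coeff_zero,
        mul_one] at h
      norm_num at h; exact h
    · have h := ext 6 1 0
      simp only [coeff_add, mul_sub, coeff_sub, coeff_mul_monomial', M_le, M_sub, coeff_zero,
        mul_one] at h
      norm_num at h; exact h
    · have h := ext 6 0 1
      simp only [coeff_add, mul_sub, coeff_sub, coeff_mul_monomial', M_le, M_sub, coeff_zero,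
        mul_one] at h
      norm_num at h; exact h
  · refine deg_le_one_eq_zero _ (hdeg 1) ?_ ?_ ?_ ?_
    · have h := ext 0 6 0
      simp only [coeff_add, mul_sub, coeff_sub, coeff_mul_monomial', M_le, M_sub, coeff_zero,
        mul_one] at h
      norm_num at h; exact h
    · have h := ext 1 6 0
      simp only [coeff_add, mul_sub, coeff_sub, coeff_mul_monomial', M_le, M_sub, coeff_zero,
        mul_one] at h
      norm_num at h; exact h
    · have h := ext 0 7 0
      simp only [coeff_add, mul_sub, coeff_sub, coeff_mul_monomial', M_le, M_sub, coeff_zero,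
        mul_one] at h
      norm_num at h; exact h
    · have h := ext 0 6 1
      simp only [coeff_add, mul_sub, coeff_sub, coeff_mul_monomial', M_le, M_sub, coeff_zero,
        mul_one] at h
      norm_num at h; exact h
  · refine deg_le_one_eq_zero _ (hdeg 2) ?_ ?_ ?_ ?_
    · have h := ext 4 2 0
      simp only [coeff_add, mul_sub, coeff_sub, coeff_mul_monomial', M_le, M_sub, coeff_zero,
        mul_one] at h
      norm_num at h; exact h
    · have h := ext 5 2 0
      simp only [coeff_add, mul_sub, coeff_sub, coeff_mul_monomial', M_le, M_sub, coeff_zero,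
        mul_one] at h
      norm_num at h; exact h
    · have h := ext 4 3 0
      simp only [coeff_add, mul_sub, coeff_sub, coeff_mul_monomial', M_le, M_sub, coeff_zero,
        mul_one] at h
      norm_num at h; exact h
    · have h := ext 4 2 1
      simp only [coeff_add, mul_sub, coeff_sub, coeff_mul_monomial', M_le, M_sub, coeff_zero,
        mul_one] at h
      norm_num at h; exact h
  · refine deg_le_one_eq_zero _ (hdeg 3) ?_ ?_ ?_ ?_
    · have h := ext 2 4 0
      simp only [coeff_add, mul_sub, coeff_sub, coeff_mul_monomial', M_le, M_sub, coeff_zero,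
        mul_one] at h
      norm_num at h; exact h
    · have h := ext 3 4 0
      simp only [coeff_add, mul_sub, coeff_sub, coeff_mul_monomial', M_le, M_sub, coeff_zero,
        mul_one] at h
      norm_num at h; exact h
    · have h := ext 2 5 0
      simp only [coeff_add, mul_sub, coeff_sub, coeff_mul_monomial', M_le, M_sub, coeff_zero,
        mul_one] at h
      norm_num at h; exact h
    · have h := ext 2 4 1
      simp only [coeff_add, mul_sub, coeff_sub, coeff_mul_monomial', M_le, M_sub, coeff_zero,
        mul_one] at h
      norm_num at h; exact h
  · refine deg_le_one_eq_zero _ (hdeg 4) ?_ ?_ ?_ ?_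
    · have h := ext 0 2 4
      simp only [coeff_add, mul_sub, coeff_sub, coeff_mul_monomial', M_le, M_sub, coeff_zero,
        mul_one] at h
      norm_num at h; exact h
    · have h := ext 1 2 4
      simp only [coeff_add, mul_sub, coeff_sub, coeff_mul_monomial', M_le, M_sub, coeff_zero,
        mul_one] at h
      norm_num at h; exact h
    · have h := ext 0 3 4
      simp only [coeff_add, mul_sub, coeff_sub, coeff_mul_monomial', M_le, M_sub, coeff_zero,
        mul_one] at h
      norm_num at h; exact h
    · have h := ext 0 2 5
      simp only [coeff_add, mul_sub, coeff_sub, coeff_mul_monomial', M_le, M_sub, coeff_zero,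
        mul_one] at h
      norm_num at h; exact h
  · refine deg_le_one_eq_zero _ (hdeg 5) ?_ ?_ ?_ ?_
    · have h := ext 4 0 2
      simp only [coeff_add, mul_sub, coeff_sub, coeff_mul_monomial', M_le, M_sub, coeff_zero,
        mul_one] at h
      norm_num at h; exact h
    · have h := ext 5 0 2
      simp only [coeff_add, mul_sub, coeff_sub, coeff_mul_monomial', M_le, M_sub, coeff_zero,
        mul_one] at h
      norm_num at h; exact h
    · have h := ext 4 1 2
      simp only [coeff_add, mul_sub, coeff_sub, coeff_mul_monomial', M_le, M_sub, coeff_zero,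
        mul_one] at h
      norm_num at h; exact h
    · have h := ext 4 0 3
      simp only [coeff_add, mul_sub, coeff_sub, coeff_mul_monomial', M_le, M_sub, coeff_zero,
        mul_one] at h
      norm_num at h; exact h
  · refine deg_le_one_eq_zero _ (hdeg 6) ?_ ?_ ?_ ?_
    · have h := ext 2 2 2
      simp only [coeff_add, mul_sub, coeff_sub, coeff_mul_monomial', M_le, M_sub, coeff_zero,
        mul_one] at h
      norm_num at h; exact h
    · have h := ext 3 2 2
      simp only [coeff_add, mul_sub, coeff_sub, coeff_mul_monomial', M_le, M_sub, coeff_zero,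
        mul_one] at h
      norm_num at h; exact h
    · have h := ext 2 3 2
      simp only [coeff_add, mul_sub, coeff_sub, coeff_mul_monomial', M_le, M_sub, coeff_zero,
        mul_one] at h
      norm_num at h; exact h
    · have h := ext 2 2 3
      simp only [coeff_add, mul_sub, coeff_sub, coeff_mul_monomial', M_le, M_sub, coeff_zero,
        mul_one] at h
      norm_num at h; exact h
end

section
/- Let p ≥ 3 be a prime number, let K be a field of characteristic p, and let F = X^{3p−1} + Y^{3p−1} + Z^{3p−1} + X^p·Z^{2p−1} ∈ K[X, Y, Z]. Then: (a) the polynomial identity X^{2p}·(Z·X^{p−1}) + Y^{2p}·(Z·Y^{p−1}) + Z^{2p}·(Z^p + X^p) = Z·F holds in K[X, Y, Z]; and (b) the only common zero in K³ of the four polynomials F, Z·X^{p−1}, Z·Y^{p−1} and Z^p + X^p is (0, 0, 0). -/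
open MvPolynomial

/--
Let `p ≥ 3` be prime, `K` a field of characteristic `p`, and
`F = X^{3p−1} + Y^{3p−1} + Z^{3p−1} + X^p·Z^{2p−1} ∈ K[X, Y, Z]`. Then:
(a) `X^{2p}·(Z·X^{p−1}) + Y^{2p}·(Z·Y^{p−1}) + Z^{2p}·(Z^p + X^p) = Z·F` in `K[X, Y, Z]`;
(b) the only common zero in `K³` of `F`, `Z·X^{p−1}`, `Z·Y^{p−1}` and `Z^p + X^p`
is `(0, 0, 0)`.
-/
theorem stmt12 (p : ℕ) (hp : p.Prime) (hp3 : 3 ≤ p)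
    {K : Type*} [Field K] [CharP K p]
    (F : MvPolynomial (Fin 3) K)
    (hF : F = X 0 ^ (3 * p - 1) + X 1 ^ (3 * p - 1) + X 2 ^ (3 * p - 1) +
      X 0 ^ p * X 2 ^ (2 * p - 1)) :
    (X 0 ^ (2 * p) * (X 2 * X 0 ^ (p - 1)) + X 1 ^ (2 * p) * (X 2 * X 1 ^ (p - 1)) +
        X 2 ^ (2 * p) * (X 2 ^ p + X 0 ^ p) = X 2 * F) ∧
      {v : Fin 3 → K | eval v F = 0 ∧ eval v (X 2 * X 0 ^ (p - 1)) = 0 ∧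
        eval v (X 2 * X 1 ^ (p - 1)) = 0 ∧ eval v (X 2 ^ p + X 0 ^ p) = 0} = {0} := by
  have h1 : 3 * p - 1 = 2 * p + (p - 1) := by omega
  have h2 : 3 * p - 1 = 2 * p + p - 1 := by omega
  have h3 : 2 * p - 1 = 2 * p + (p - 1) - p := by omega
  have h4 : p + (2 * p - 1) = 3 * p - 1 := by omega
  have h5 : 2 * p + p = 3 * p := by omega
  have h6 : 1 + (3 * p - 1) = 3 * p := by omega
  have hp1 : p - 1 + 1 = p := by omega
  constructor
  · have e0 : (X 0 : MvPolynomial (Fin 3) K) ^ (2 * p) * (X 2 * X 0 ^ (p - 1)) =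
        X 2 * X 0 ^ (3 * p - 1) := by
      rw [h1, pow_add]; ring
    have e1 : (X 1 : MvPolynomial (Fin 3) K) ^ (2 * p) * (X 2 * X 1 ^ (p - 1)) =
        X 2 * X 1 ^ (3 * p - 1) := by
      rw [h1, pow_add]; ring
    have a1 : (X 2 : MvPolynomial (Fin 3) K) ^ (2 * p) * X 2 ^ p =
        X 2 * X 2 ^ (3 * p - 1) := by
      rw [← pow_add, show 2 * p + p = 1 + (3 * p - 1) by omega, pow_add, pow_one]
    have a2 : (X 2 : MvPolynomial (Fin 3) K) ^ (2 * p) * X 0 ^ p =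
        X 2 * (X 0 ^ p * X 2 ^ (2 * p - 1)) := by
      conv_lhs => rw [show 2 * p = 1 + (2 * p - 1) by omega]
      rw [pow_add, pow_one]; ring
    rw [hF, e0, e1, mul_add, a1, a2]
    ring
  · ext v
    simp only [Set.mem_setOf_eq, Set.mem_singleton_iff, hF, map_add, map_mul, map_pow,
      eval_X]
    constructor
    · rintro ⟨hFv, ha, hb, hc⟩
      have hpne : (3 * p - 1) ≠ 0 := by omega
      have hz : v 2 = 0 := by
        by_contra hz
        have ha0 : v 0 = 0 := by
          have := mul_eq_zero.mp ha
          rcases this with h | h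
          · exact absurd h hz
          · have := pow_eq_zero_iff (by omega : p - 1 ≠ 0) |>.mp h
            exact this
        have hb0 : v 1 = 0 := by
          rcases mul_eq_zero.mp hb with h | h
          · exact absurd h hz
          · exact pow_eq_zero_iff (by omega : p - 1 ≠ 0) |>.mp h
        have : v 2 ^ p = 0 := by
          have := hc
          rw [ha0, zero_pow hp.ne_zero, add_zero] at this
          exact this
        exact hz (pow_eq_zero_iff hp.ne_zero |>.mp this)
      have ha0 : v 0 = 0 := by
        have := hc
        rw [hz, zero_pow hp.ne_zero, zero_add] at this
        exact pow_eq_zero_iff hp.ne_zero |>.mp this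
      have hb0 : v 1 = 0 := by
        rw [hz, ha0, zero_pow hpne, zero_pow hp.ne_zero, zero_pow (by omega : 2*p-1 ≠ 0)] at hFv
        simpa [hpne] using hFv
      funext i
      fin_cases i <;> simp [ha0, hb0, hz]
    · rintro rfl
      have h0 : (0 : K) ^ (3 * p - 1) = 0 := zero_pow (by omega)
      simp [h0, zero_pow hp.ne_zero, zero_pow (show 2 * p - 1 ≠ 0 by omega),
        zero_pow (show p - 1 ≠ 0 by omega)]
end

section
/- Let K be a field and R = K[X, Y, Z]. Then the radical of the ideal I = (X² − Y², X² − Z², XY, XZ, YZ) of R equals the irrelevant maximal ideal (X, Y, Z); in particular X³, Y³, Z³ ∈ I and I is (X, Y, Z)-primary. -/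
open MvPolynomial

lemma span_X_eq_vanishingIdeal {K : Type*} [Field K] :
    (Ideal.span {X 0, X 1, X 2} : Ideal (MvPolynomial (Fin 3) K)) =
      MvPolynomial.vanishingIdeal K {(0 : Fin 3 → K)} := by
  apply le_antisymm
  · rw [Ideal.span_le]
    rintro p hp
    simp only [Set.mem_insert_iff, Set.mem_singleton_iff] at hp
    rcases hp with rfl | rfl | rfl <;>
      simp [MvPolynomial.mem_vanishingIdeal_singleton_iff]
  · intro p hp
    rw [MvPolynomial.mem_vanishingIdeal_singleton_iff] at hp
    have hset : ({X 0, X 1, X 2} : Set (MvPolynomial (Fin 3) K)) =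
        MvPolynomial.X '' Set.univ := by
      ext q
      simp only [Set.image_univ, Set.mem_range, Set.mem_insert_iff, Set.mem_singleton_iff]
      constructor
      · rintro (rfl | rfl | rfl) <;> exact ⟨_, rfl⟩
      · rintro ⟨i, rfl⟩
        fin_cases i <;> simp
    rw [hset, MvPolynomial.mem_ideal_span_X_image]
    intro m hm
    by_cases h0 : m = 0
    · exfalso
      subst h0
      have hc : MvPolynomial.coeff 0 p = 0 := by
        rw [← MvPolynomial.constantCoeff_eq, ← MvPolynomial.eval_zero]
        exact hp
      exact (MvPolynomial.mem_support_iff.mp hm) hc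
    · obtain ⟨i, hi⟩ := Finsupp.ne_iff.mp h0
      exact ⟨i, Set.mem_univ i, by simpa using hi⟩

/--
Let `K` be a field and `R = K[X, Y, Z]`. Then the radical of
`I = (X² − Y², X² − Z², XY, XZ, YZ)` equals the irrelevant maximal ideal `(X, Y, Z)`;
in particular `X³, Y³, Z³ ∈ I` and `I` is `(X, Y, Z)`-primary.
-/
theorem stmt13 {K : Type*} [Field K]
    (I : Ideal (MvPolynomial (Fin 3) K))
    (hI : I = Ideal.span {X 0 ^ 2 - X 1 ^ 2, X 0 ^ 2 - X 2 ^ 2,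
      X 0 * X 1, X 0 * X 2, X 1 * X 2}) :
    I.radical = Ideal.span {X 0, X 1, X 2} ∧
      X 0 ^ 3 ∈ I ∧ X 1 ^ 3 ∈ I ∧ X 2 ^ 3 ∈ I ∧ I.IsPrimary := by
  have mem : ∀ p ∈ ({X 0 ^ 2 - X 1 ^ 2, X 0 ^ 2 - X 2 ^ 2,
      X 0 * X 1, X 0 * X 2, X 1 * X 2} : Set (MvPolynomial (Fin 3) K)), p ∈ I := by
    intro p hp; rw [hI]; exact Ideal.subset_span hp
  have g1 : (X 0 ^ 2 - X 1 ^ 2 : MvPolynomial (Fin 3) K) ∈ I := mem _ (by simp)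
  have g2 : (X 0 ^ 2 - X 2 ^ 2 : MvPolynomial (Fin 3) K) ∈ I := mem _ (by simp)
  have g3 : (X 0 * X 1 : MvPolynomial (Fin 3) K) ∈ I := mem _ (by simp)
  have g4 : (X 0 * X 2 : MvPolynomial (Fin 3) K) ∈ I := mem _ (by simp)
  have h0 : (X 0 : MvPolynomial (Fin 3) K) ^ 3 ∈ I := by
    have : (X 0 : MvPolynomial (Fin 3) K) ^ 3 =
        X 0 * (X 0 ^ 2 - X 1 ^ 2) + X 1 * (X 0 * X 1) := by ring
    rw [this]
    exact Ideal.add_mem _ (Ideal.mul_mem_left _ _ g1) (Ideal.mul_mem_left _ _ g3)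
  have h1 : (X 1 : MvPolynomial (Fin 3) K) ^ 3 ∈ I := by
    have : (X 1 : MvPolynomial (Fin 3) K) ^ 3 =
        -(X 1 * (X 0 ^ 2 - X 1 ^ 2)) + X 0 * (X 0 * X 1) := by ring
    rw [this]
    exact Ideal.add_mem _ (neg_mem (Ideal.mul_mem_left _ _ g1))
      (Ideal.mul_mem_left _ _ g3)
  have h2 : (X 2 : MvPolynomial (Fin 3) K) ^ 3 ∈ I := by
    have : (X 2 : MvPolynomial (Fin 3) K) ^ 3 =
        -(X 2 * (X 0 ^ 2 - X 2 ^ 2)) + X 0 * (X 0 * X 2) := by ring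
    rw [this]
    exact Ideal.add_mem _ (neg_mem (Ideal.mul_mem_left _ _ g2))
      (Ideal.mul_mem_left _ _ g4)
  have hmax : (Ideal.span {X 0, X 1, X 2} : Ideal (MvPolynomial (Fin 3) K)).IsMaximal := by
    rw [span_X_eq_vanishingIdeal]
    infer_instance
  have hrad : I.radical = Ideal.span {X 0, X 1, X 2} := by
    apply le_antisymm
    · have hle : I ≤ Ideal.span {X 0, X 1, X 2} := by
        rw [hI, Ideal.span_le]
        intro p hp
        simp only [Set.mem_insert_iff, Set.mem_singleton_iff] at hp
        have hx0 : (X 0 : MvPolynomial (Fin 3) K) ∈ Ideal.span {X 0, X 1, X 2} :=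
          Ideal.subset_span (by simp)
        have hx1 : (X 1 : MvPolynomial (Fin 3) K) ∈ Ideal.span {X 0, X 1, X 2} :=
          Ideal.subset_span (by simp)
        have hx2 : (X 2 : MvPolynomial (Fin 3) K) ∈ Ideal.span {X 0, X 1, X 2} :=
          Ideal.subset_span (by simp)
        rcases hp with rfl | rfl | rfl | rfl | rfl
        · exact Ideal.sub_mem _ (by rw [sq]; exact Ideal.mul_mem_left _ _ hx0)
            (by rw [sq]; exact Ideal.mul_mem_left _ _ hx1)
        · exact Ideal.sub_mem _ (by rw [sq]; exact Ideal.mul_mem_left _ _ hx0)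
            (by rw [sq]; exact Ideal.mul_mem_left _ _ hx2)
        · exact Ideal.mul_mem_left _ _ hx1
        · exact Ideal.mul_mem_left _ _ hx2
        · exact Ideal.mul_mem_left _ _ hx2
      calc I.radical ≤ (Ideal.span {X 0, X 1, X 2}).radical := Ideal.radical_mono hle
        _ = Ideal.span {X 0, X 1, X 2} := hmax.isPrime.radical
    · rw [Ideal.span_le]
      intro p hp
      simp only [Set.mem_insert_iff, Set.mem_singleton_iff] at hp
      rcases hp with rfl | rfl | rfl
      · exact ⟨3, h0⟩
      · exact ⟨3, h1⟩
      · exact ⟨3, h2⟩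
  refine ⟨hrad, h0, h1, h2, ?_⟩
  exact Ideal.isPrimary_of_isMaximal_radical (hrad ▸ hmax)
end
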